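/- Let n, k ∈ ℕ with n ≥ 1 and k ≥ 1, let X be a real n × k matrix such that XᵀX is invertible, let Y ∈ ℝ^n with Y ≠ 0, and let g > 0. Let P = X(XᵀX)⁻¹Xᵀ and R² = YᵀPY/‖Y‖₂². Then ∫₀^∞ ∫_{ℝ^k} (φ/(2π))^{n/2} exp(−(φ/2)‖Y − Xβ‖₂²) · (φ/(2πg))^{k/2} (det(XᵀX))^{1/2} exp(−(φ/(2g)) βᵀXᵀXβ) · φ^{−1} dβ dφ = Γ(n/2) (1+g)^{(n−k)/2} / (π^{n/2} ‖Y‖₂ⁿ (1 + g(1 − R²))^{n/2}), which equals the paper's expression [Γ(n/2)(1+g)^{n/2}/(π^{n/2}‖Y‖₂ⁿ)] · (1+g)^{−k/2}/[1 + g(1 − R²)]^{n/2}. -/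

import Mathlib

open Matrix MeasureTheory
open scoped MatrixOrder

lemma integral_comp_mulVec {k : ℕ} (B : Matrix (Fin k) (Fin k) ℝ) (hB : B.det ≠ 0)
    {f : (Fin k → ℝ) → ℝ} (hf : Measurable f) :
    ∫ β : Fin k → ℝ, f (B.mulVec β) = |B.det|⁻¹ * ∫ u : Fin k → ℝ, f u := by
  have hmap := Real.map_matrix_volume_pi_eq_smul_volume_pi hB
  have hcont : Continuous (Matrix.toLin' B) := LinearMap.continuous_of_finiteDimensional _
  have h1 : ∫ β : Fin k → ℝ, f (B.mulVec β) =
      ∫ u, f u ∂(Measure.map (Matrix.toLin' B) volume) := by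
    rw [integral_map hcont.measurable.aemeasurable hf.aestronglyMeasurable]
    simp [Matrix.toLin'_apply]
  rw [h1, hmap, integral_smul_measure, ENNReal.toReal_ofReal (by positivity), smul_eq_mul,
    abs_inv]

lemma gauss_pi (k : ℕ) {c : ℝ} (hc : 0 < c) :
    ∫ u : Fin k → ℝ, Real.exp (-(c * (u ⬝ᵥ u))) = (Real.pi / c) ^ ((k : ℝ) / 2) := by
  have h1 : ∀ u : Fin k → ℝ, Real.exp (-(c * (u ⬝ᵥ u))) =
      ∏ i, Real.exp (-c * (u i) ^ 2) := by
    intro u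
    rw [← Real.exp_sum]
    congr 1
    simp [dotProduct, Finset.mul_sum, sq, neg_mul]
  simp_rw [h1]
  rw [MeasureTheory.volume_pi, MeasureTheory.integral_fintype_prod_eq_pow (ι := Fin k) (fun x => Real.exp (-c * x ^ 2)),
    integral_gaussian, Fintype.card_fin]
  rw [← Real.rpow_natCast (Real.sqrt _) k, Real.sqrt_eq_rpow, ← Real.rpow_mul (by positivity)]
  ring_nf

lemma gauss_quad {k : ℕ} {A : Matrix (Fin k) (Fin k) ℝ} (hA : A.PosSemidef) (hd : A.det ≠ 0)
    {c : ℝ} (hc : 0 < c) :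
    ∫ β : Fin k → ℝ, Real.exp (-(c * (β ⬝ᵥ A.mulVec β)))
      = (Real.pi / c) ^ ((k : ℝ) / 2) / Real.sqrt A.det := by
  set B := CFC.sqrt A with hBdef
  have hBB : B * B = A := CFC.sqrt_mul_sqrt_self A hA.nonneg
  have hBsymm : Bᵀ = B := by
    have := (CFC.sqrt_nonneg A).posSemidef.1
    rw [← Matrix.conjTranspose_eq_transpose_of_trivial]
    exact this
  have hdetB : B.det ^ 2 = A.det := by rw [← hBB, Matrix.det_mul, sq]
  have hdB : B.det ≠ 0 := fun h => hd (by rw [← hdetB, h]; ring)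
  have hquad : ∀ β : Fin k → ℝ, β ⬝ᵥ A.mulVec β = (B.mulVec β) ⬝ᵥ (B.mulVec β) := by
    intro β
    rw [← hBB, ← Matrix.mulVec_mulVec, Matrix.dotProduct_mulVec β B,
      ← Matrix.mulVec_transpose, hBsymm]
  simp_rw [hquad]
  have hf : Measurable fun u : Fin k → ℝ => Real.exp (-(c * (u ⬝ᵥ u))) := by
    apply Measurable.exp
    apply Measurable.neg
    apply Measurable.const_mul
    exact (Continuous.measurable (by continuity))
  rw [integral_comp_mulVec B hdB hf, gauss_pi k hc]
  have habs : |B.det| = Real.sqrt A.det := by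
    rw [← hdetB, Real.sqrt_sq_eq_abs]
  rw [habs, div_eq_inv_mul, mul_comm]
  ring

/-- The closed-form marginal likelihood under the g-prior with improper precision prior
`π(φ) ∝ 1/φ` (equations (2.6)–(2.8) of the paper): integrating the Gaussian likelihood
times the g-prior density of `β` times `1/φ` over `β ∈ ℝ^k` and `φ ∈ (0, ∞)` gives
`Γ(n/2)(1+g)^{(n−k)/2} / (π^{n/2} ‖Y‖₂ⁿ (1 + g(1 − R²))^{n/2})`, where
`R² = YᵀPY/‖Y‖₂²` with `P = X(XᵀX)⁻¹Xᵀ`; this equals the paper's expression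
`[Γ(n/2)(1+g)^{n/2}/(π^{n/2}‖Y‖₂ⁿ)] · (1+g)^{−k/2}/[1 + g(1 − R²)]^{n/2}`. -/
theorem gprior_marginal_likelihood {n k : ℕ} (hn : 1 ≤ n) (hk : 1 ≤ k)
    (X : Matrix (Fin n) (Fin k) ℝ) (hX : IsUnit (Xᵀ * X))
    (Y : Fin n → ℝ) (hY : Y ≠ 0) (g : ℝ) (hg : 0 < g) :
    (∫ φ in Set.Ioi (0 : ℝ), ∫ β : Fin k → ℝ,
      (φ / (2 * Real.pi)) ^ ((n : ℝ) / 2) *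
        Real.exp (-(φ / 2) * ∑ i, (Y i - (X.mulVec β) i) ^ 2) *
      ((φ / (2 * Real.pi * g)) ^ ((k : ℝ) / 2) * Real.sqrt (Xᵀ * X).det *
        Real.exp (-(φ / (2 * g)) * (β ⬝ᵥ (Xᵀ * X).mulVec β))) * φ⁻¹)
    = Real.Gamma ((n : ℝ) / 2) * (1 + g) ^ (((n : ℝ) - (k : ℝ)) / 2) /
        (Real.pi ^ ((n : ℝ) / 2) * Real.sqrt (Y ⬝ᵥ Y) ^ n *
          (1 + g * (1 - Y ⬝ᵥ (X * (Xᵀ * X)⁻¹ * Xᵀ).mulVec Y / (Y ⬝ᵥ Y)))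
            ^ ((n : ℝ) / 2)) ∧
    Real.Gamma ((n : ℝ) / 2) * (1 + g) ^ (((n : ℝ) - (k : ℝ)) / 2) /
        (Real.pi ^ ((n : ℝ) / 2) * Real.sqrt (Y ⬝ᵥ Y) ^ n *
          (1 + g * (1 - Y ⬝ᵥ (X * (Xᵀ * X)⁻¹ * Xᵀ).mulVec Y / (Y ⬝ᵥ Y)))
            ^ ((n : ℝ) / 2))
    = (Real.Gamma ((n : ℝ) / 2) * (1 + g) ^ ((n : ℝ) / 2) /
        (Real.pi ^ ((n : ℝ) / 2) * Real.sqrt (Y ⬝ᵥ Y) ^ n)) *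
      ((1 + g) ^ (-(k : ℝ) / 2) /
        (1 + g * (1 - Y ⬝ᵥ (X * (Xᵀ * X)⁻¹ * Xᵀ).mulVec Y / (Y ⬝ᵥ Y)))
          ^ ((n : ℝ) / 2)) := by
  have hg1 : (0 : ℝ) < 1 + g := by linarith
  set A := Xᵀ * X with hAdef
  have hA : A.PosSemidef := by
    have := Matrix.posSemidef_conjTranspose_mul_self X
    rwa [Matrix.conjTranspose_eq_transpose_of_trivial] at this
  have hAsymm : Aᵀ = A := by rw [hAdef, Matrix.transpose_mul, Matrix.transpose_transpose]
  have hdet : A.det ≠ 0 := by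
    have := (Matrix.isUnit_iff_isUnit_det A).mp hX
    exact this.ne_zero
  have hdetpos : 0 < A.det := by
    have h1 : A.det = (CFC.sqrt A).det ^ 2 := by
      conv_lhs => rw [← CFC.sqrt_mul_sqrt_self A hA.nonneg]
      rw [Matrix.det_mul, sq]
    exact lt_of_le_of_ne (h1 ▸ sq_nonneg _) (Ne.symm hdet)
  -- abbreviations
  set w : Fin k → ℝ := Xᵀ.mulVec Y with hwdef
  set t : ℝ := g / (1 + g) with htdef
  set β₀ : Fin k → ℝ := t • (A⁻¹.mulVec w) with hβ₀def
  set c : ℝ := Y ⬝ᵥ Y with hcdef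
  set q : ℝ := w ⬝ᵥ (A⁻¹.mulVec w) with hqdef
  set S : ℝ := c - t * q with hSdef
  set r : ℝ := (1 + g) / g with hrdef
  have hc : 0 < c := by
    obtain ⟨i, hi⟩ := Function.ne_iff.mp hY
    rw [hcdef]
    have : Y ⬝ᵥ Y = ∑ j, Y j * Y j := rfl
    rw [this]
    apply Finset.sum_pos' (fun j _ => mul_self_nonneg _)
    exact ⟨i, Finset.mem_univ i, mul_self_pos.mpr hi⟩
  -- basic mulVec facts
  have hAβ₀ : A.mulVec β₀ = t • w := by
    rw [hβ₀def, Matrix.mulVec_smul, Matrix.mulVec_mulVec, Matrix.mul_nonsing_inv _ ((Matrix.isUnit_iff_isUnit_det A).mp hX),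
      Matrix.one_mulVec]
  have hsym : ∀ u v : Fin k → ℝ, u ⬝ᵥ A.mulVec v = v ⬝ᵥ A.mulVec u := by
    intro u v
    rw [Matrix.dotProduct_mulVec, ← Matrix.mulVec_transpose, hAsymm, dotProduct_comm]
  have hXY : ∀ β : Fin k → ℝ, (X.mulVec β) ⬝ᵥ Y = β ⬝ᵥ w := by
    intro β
    rw [dotProduct_comm, Matrix.dotProduct_mulVec, ← Matrix.mulVec_transpose, ← hwdef,
      dotProduct_comm]
  have hXX : ∀ β : Fin k → ℝ, (X.mulVec β) ⬝ᵥ (X.mulVec β) = β ⬝ᵥ A.mulVec β := by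
    intro β
    rw [hAdef, ← Matrix.mulVec_mulVec, Matrix.dotProduct_mulVec β Xᵀ,
      ← Matrix.mulVec_transpose, Matrix.transpose_transpose]
  have hq' : Y ⬝ᵥ (X * A⁻¹ * Xᵀ).mulVec Y = q := by
    rw [← Matrix.mulVec_mulVec, ← Matrix.mulVec_mulVec, Matrix.dotProduct_mulVec,
      ← Matrix.mulVec_transpose]
  have hsum : ∀ β : Fin k → ℝ, ∑ i, (Y i - (X.mulVec β) i) ^ 2
      = (Y - X.mulVec β) ⬝ᵥ (Y - X.mulVec β) := by
    intro β
    simp [dotProduct, sq]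
  -- the key completing-the-square identity
  have key : ∀ β : Fin k → ℝ,
      (∑ i, (Y i - (X.mulVec β) i) ^ 2) + (1 / g) * (β ⬝ᵥ A.mulVec β)
        = r * ((β - β₀) ⬝ᵥ A.mulVec (β - β₀)) + S := by
    intro β
    rw [hsum β, sub_dotProduct, dotProduct_sub, dotProduct_sub]
    rw [Matrix.mulVec_sub, dotProduct_sub, sub_dotProduct, sub_dotProduct]
    rw [hAβ₀, dotProduct_smul, smul_eq_mul, dotProduct_smul, smul_eq_mul]
    rw [hsym β₀ β, hAβ₀, dotProduct_smul, smul_eq_mul]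
    rw [hβ₀def, smul_dotProduct, smul_eq_mul]
    rw [hXY β, hXX β, dotProduct_comm Y (X.mulVec β), hXY β]
    rw [dotProduct_comm (A⁻¹.mulVec w) w] at *
    rw [hSdef, hrdef, htdef, hcdef, hqdef]
    rw [dotProduct_comm w (A⁻¹.mulVec w), dotProduct_comm Y Y]
    field_simp
    ring
  have hquad_nonneg : ∀ v : Fin k → ℝ, 0 ≤ v ⬝ᵥ A.mulVec v := fun v => by simpa using hA.dotProduct_mulVec_nonneg v
  -- positivity of S
  have hS0 : (∑ i, (Y i - (X.mulVec β₀) i) ^ 2) + (1 / g) * (β₀ ⬝ᵥ A.mulVec β₀) = S := by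
    have h := key β₀
    simpa using h
  have hS : 0 < S := by
    rw [← hS0]
    by_cases hcase : Y = X.mulVec β₀
    · have h1 : β₀ ⬝ᵥ A.mulVec β₀ = c := by rw [← hXX, ← hcase]
      have h2 : 0 ≤ ∑ i, (Y i - (X.mulVec β₀) i) ^ 2 :=
        Finset.sum_nonneg fun i _ => sq_nonneg _
      have h3 : 0 < (1 / g) * (β₀ ⬝ᵥ A.mulVec β₀) := by
        rw [h1]; positivity
      linarith
    · obtain ⟨i, hi⟩ := Function.ne_iff.mp hcase
      have h2 : 0 < ∑ i, (Y i - (X.mulVec β₀) i) ^ 2 := by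
        apply Finset.sum_pos' (fun j _ => sq_nonneg _)
        exact ⟨i, Finset.mem_univ i, by have h := sub_ne_zero.mpr hi; positivity⟩
      have h3 : 0 ≤ (1 / g) * (β₀ ⬝ᵥ A.mulVec β₀) := by
        have := hquad_nonneg β₀; positivity
      linarith
  have hr : 0 < r := by rw [hrdef]; positivity
  -- the inner integral
  have inner : ∀ φ ∈ Set.Ioi (0 : ℝ), (∫ β : Fin k → ℝ,
      (φ / (2 * Real.pi)) ^ ((n : ℝ) / 2) *
        Real.exp (-(φ / 2) * ∑ i, (Y i - (X.mulVec β) i) ^ 2) *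
      ((φ / (2 * Real.pi * g)) ^ ((k : ℝ) / 2) * Real.sqrt A.det *
        Real.exp (-(φ / (2 * g)) * (β ⬝ᵥ A.mulVec β))) * φ⁻¹)
      = ((1 / (1 + g)) ^ ((k : ℝ) / 2) / (2 * Real.pi) ^ ((n : ℝ) / 2)) *
        (φ ^ ((n : ℝ) / 2 - 1) * Real.exp (-(S / 2 * φ))) := by
    intro φ hφ
    have hφ0 : 0 < φ := hφ
    have hc' : 0 < φ * r / 2 := by positivity
    have hpt : ∀ β : Fin k → ℝ,
        (φ / (2 * Real.pi)) ^ ((n : ℝ) / 2) *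
          Real.exp (-(φ / 2) * ∑ i, (Y i - (X.mulVec β) i) ^ 2) *
        ((φ / (2 * Real.pi * g)) ^ ((k : ℝ) / 2) * Real.sqrt A.det *
          Real.exp (-(φ / (2 * g)) * (β ⬝ᵥ A.mulVec β))) * φ⁻¹
        = ((φ / (2 * Real.pi)) ^ ((n : ℝ) / 2) * (φ / (2 * Real.pi * g)) ^ ((k : ℝ) / 2) *
            Real.sqrt A.det * φ⁻¹ * Real.exp (-(φ / 2 * S))) *
          Real.exp (-(φ * r / 2 * ((β - β₀) ⬝ᵥ A.mulVec (β - β₀)))) := by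
      intro β
      have hexp : Real.exp (-(φ / 2) * ∑ i, (Y i - (X.mulVec β) i) ^ 2) *
          Real.exp (-(φ / (2 * g)) * (β ⬝ᵥ A.mulVec β))
          = Real.exp (-(φ * r / 2 * ((β - β₀) ⬝ᵥ A.mulVec (β - β₀)))) *
            Real.exp (-(φ / 2 * S)) := by
        rw [← Real.exp_add, ← Real.exp_add]
        congr 1
        linear_combination (-(φ / 2)) * key β
      calc (φ / (2 * Real.pi)) ^ ((n : ℝ) / 2) *
          Real.exp (-(φ / 2) * ∑ i, (Y i - (X.mulVec β) i) ^ 2) *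
        ((φ / (2 * Real.pi * g)) ^ ((k : ℝ) / 2) * Real.sqrt A.det *
          Real.exp (-(φ / (2 * g)) * (β ⬝ᵥ A.mulVec β))) * φ⁻¹
          = ((φ / (2 * Real.pi)) ^ ((n : ℝ) / 2) * (φ / (2 * Real.pi * g)) ^ ((k : ℝ) / 2) *
              Real.sqrt A.det * φ⁻¹) *
            (Real.exp (-(φ / 2) * ∑ i, (Y i - (X.mulVec β) i) ^ 2) *
              Real.exp (-(φ / (2 * g)) * (β ⬝ᵥ A.mulVec β))) := by ring
        _ = _ := by rw [hexp]; ring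
    simp_rw [hpt]
    rw [MeasureTheory.integral_const_mul]
    have hshift : (∫ β : Fin k → ℝ,
        Real.exp (-(φ * r / 2 * ((β - β₀) ⬝ᵥ A.mulVec (β - β₀)))))
        = ∫ β : Fin k → ℝ, Real.exp (-(φ * r / 2 * (β ⬝ᵥ A.mulVec β))) :=
      integral_sub_right_eq_self (fun v => Real.exp (-(φ * r / 2 * (v ⬝ᵥ A.mulVec v)))) β₀
    rw [hshift, gauss_quad hA hdet hc']
    -- now pure scalar computation
    have hsqd : Real.sqrt A.det ≠ 0 := ne_of_gt (Real.sqrt_pos.mpr hdetpos)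
    have hπ : (0:ℝ) < Real.pi := Real.pi_pos
    have hbase : (φ / (2 * Real.pi * g)) * (Real.pi / (φ * r / 2)) = 1 / (1 + g) := by
      rw [hrdef]
      field_simp
    have hcomb : (φ / (2 * Real.pi * g)) ^ ((k : ℝ) / 2) *
        (Real.pi / (φ * r / 2)) ^ ((k : ℝ) / 2) = (1 / (1 + g)) ^ ((k : ℝ) / 2) := by
      rw [← Real.mul_rpow (by positivity) (by positivity), hbase]
    have hφsplit : (φ / (2 * Real.pi)) ^ ((n : ℝ) / 2) =
        φ ^ ((n : ℝ) / 2) * (1 / (2 * Real.pi)) ^ ((n : ℝ) / 2) := by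
      rw [← Real.mul_rpow (le_of_lt hφ0) (by positivity)]
      congr 1
      ring
    have hφpow : φ ^ ((n : ℝ) / 2) * φ⁻¹ = φ ^ ((n : ℝ) / 2 - 1) := by
      rw [Real.rpow_sub hφ0, Real.rpow_one]; ring
    have hexparg : Real.exp (-(φ / 2 * S)) = Real.exp (-(S / 2 * φ)) := by ring_nf
    have honediv : ((1:ℝ) / (2 * Real.pi)) ^ ((n : ℝ) / 2) =
        1 / (2 * Real.pi) ^ ((n : ℝ) / 2) := by
      rw [Real.div_rpow zero_le_one (by positivity), Real.one_rpow]
    calc ((φ / (2 * Real.pi)) ^ ((n : ℝ) / 2) * (φ / (2 * Real.pi * g)) ^ ((k : ℝ) / 2) *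
            Real.sqrt A.det * φ⁻¹ * Real.exp (-(φ / 2 * S))) *
          ((Real.pi / (φ * r / 2)) ^ ((k : ℝ) / 2) / Real.sqrt A.det)
        = ((φ / (2 * Real.pi * g)) ^ ((k : ℝ) / 2) * (Real.pi / (φ * r / 2)) ^ ((k : ℝ) / 2)) *
          ((φ / (2 * Real.pi)) ^ ((n : ℝ) / 2) * φ⁻¹) * Real.exp (-(φ / 2 * S)) *
          (Real.sqrt A.det / Real.sqrt A.det) := by ring
      _ = _ := by
          rw [hcomb, div_self hsqd, hφsplit, hexparg]
          rw [mul_one]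
          rw [show φ ^ ((n : ℝ) / 2) * (1 / (2 * Real.pi)) ^ ((n : ℝ) / 2) * φ⁻¹
              = (φ ^ ((n : ℝ) / 2) * φ⁻¹) * (1 / (2 * Real.pi)) ^ ((n : ℝ) / 2) by ring,
            hφpow, honediv]
          ring
  rw [MeasureTheory.setIntegral_congr_fun measurableSet_Ioi inner]
  rw [MeasureTheory.integral_const_mul]
  have hn2 : (0:ℝ) < (n : ℝ) / 2 := by
    have : (1:ℝ) ≤ (n:ℝ) := by exact_mod_cast hn
    linarith
  rw [Real.integral_rpow_mul_exp_neg_mul_Ioi hn2 (by positivity : (0:ℝ) < S / 2)]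
  -- final algebra
  rw [hq']
  set T : ℝ := 1 + g * (1 - q / c) with hTdef
  have hCT : S * (1 + g) = c * T := by
    rw [hSdef, hTdef, htdef]
    field_simp
    ring
  have hT : 0 < T := by
    have : T = S * (1 + g) / c := by rw [hCT]; field_simp
    rw [this]; positivity
  have hπ : (0:ℝ) < Real.pi := Real.pi_pos
  have hsqc : Real.sqrt c ^ n = c ^ ((n : ℝ) / 2) := by
    rw [Real.sqrt_eq_rpow, ← Real.rpow_natCast (c ^ ((1:ℝ)/2)) n,
      ← Real.rpow_mul hc.le]
    norm_num
    rw [mul_comm, mul_one_div]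
  have hSval : (1:ℝ) / (S / 2) = 2 * (1 + g) / (c * T) := by
    rw [← hCT]
    field_simp
  have hsplit1 : ((1:ℝ) / (S / 2)) ^ ((n : ℝ) / 2)
      = 2 ^ ((n : ℝ) / 2) * (1 + g) ^ ((n : ℝ) / 2) / (c ^ ((n : ℝ) / 2) * T ^ ((n : ℝ) / 2)) := by
    rw [hSval, Real.div_rpow (by positivity) (by positivity),
      Real.mul_rpow (by norm_num) hg1.le, Real.mul_rpow hc.le hT.le]
  have hsplit2 : ((2:ℝ) * Real.pi) ^ ((n : ℝ) / 2)
      = 2 ^ ((n : ℝ) / 2) * Real.pi ^ ((n : ℝ) / 2) :=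
    Real.mul_rpow (by norm_num) hπ.le
  have hsplit3 : ((1:ℝ) / (1 + g)) ^ ((k : ℝ) / 2) = 1 / (1 + g) ^ ((k : ℝ) / 2) := by
    rw [Real.div_rpow zero_le_one hg1.le, Real.one_rpow]
  have hsplit4 : (1 + g) ^ (((n : ℝ) - (k : ℝ)) / 2)
      = (1 + g) ^ ((n : ℝ) / 2) / (1 + g) ^ ((k : ℝ) / 2) := by
    rw [show ((n : ℝ) - (k : ℝ)) / 2 = (n : ℝ) / 2 - (k : ℝ) / 2 by ring,
      Real.rpow_sub hg1]
  constructor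
  · rw [hsplit1, hsplit2, hsplit3, hsplit4, hsqc]
    have p1 : (0:ℝ) < 2 ^ ((n : ℝ) / 2) := Real.rpow_pos_of_pos (by norm_num) _
    have p2 : (0:ℝ) < Real.pi ^ ((n : ℝ) / 2) := Real.rpow_pos_of_pos hπ _
    have p3 : (0:ℝ) < c ^ ((n : ℝ) / 2) := Real.rpow_pos_of_pos hc _
    have p4 : (0:ℝ) < T ^ ((n : ℝ) / 2) := Real.rpow_pos_of_pos hT _
    have p5 : (0:ℝ) < (1 + g) ^ ((k : ℝ) / 2) := Real.rpow_pos_of_pos hg1 _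
    field_simp
  · rw [hsplit4, hsqc]
    have hneg : (1 + g) ^ (-(k : ℝ) / 2) = 1 / (1 + g) ^ ((k : ℝ) / 2) := by
      rw [show (-(k : ℝ)) / 2 = -((k : ℝ) / 2) by ring, Real.rpow_neg hg1.le, inv_eq_one_div]
    rw [hneg]
    have p5 : (0:ℝ) < (1 + g) ^ ((k : ℝ) / 2) := Real.rpow_pos_of_pos hg1 _
    field_simp
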